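/- arXiv:2004.03571 — 5 statements merged into one kernel-verified Lean document; each statement's English description precedes it below -/
import Mathlib

section
/- For any graph G, the stack number of G is at most four times the layered pathwidth of G, i.e., sn(G) ≤ 4·lpw(G). -/
def IsLayering {V : Type*} (G : SimpleGraph V) (ℓ : V → ℤ) : Prop :=
  ∀ v w, G.Adj v w → |ℓ v - ℓ w| ≤ 1

structure IsPathDecomp {V : Type*} (G : SimpleGraph V) (p : ℕ)
    (B : Fin p → Finset V) : Prop where
  mem_bag : ∀ v, ∃ i, v ∈ B i
  interval : ∀ v (i j k : Fin p), i ≤ j → j ≤ k → v ∈ B i → v ∈ B k → v ∈ B j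
  edge_bag : ∀ v w, G.Adj v w → ∃ i, v ∈ B i ∧ w ∈ B i

def LayeredWidthLE {V : Type*} (ℓ : V → ℤ) (p : ℕ) (B : Fin p → Finset V) (k : ℕ) : Prop :=
  ∀ (i : ℤ) (j : Fin p), ((B j).filter fun v => ℓ v = i).card ≤ k

/-- `G` has layered pathwidth at most `k`. -/
def LPWle {V : Type*} (G : SimpleGraph V) (k : ℕ) : Prop :=
  ∃ (ℓ : V → ℤ) (p : ℕ) (B : Fin p → Finset V),
    IsLayering G ℓ ∧ IsPathDecomp G p B ∧ LayeredWidthLE ℓ p B k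
/-- `G` has a stack layout with at most `s` stacks: a vertex order (given by an
injective map to `ℕ`) and an assignment of each edge to one of `s` stacks such
that no two edges in a common stack cross. -/
def StackLayoutLE {V : Type*} (G : SimpleGraph V) (s : ℕ) : Prop :=
  ∃ (f : V → ℕ) (col : V → V → ℕ),
    Function.Injective f ∧
    (∀ v w, G.Adj v w → col v w = col w v) ∧
    (∀ v w, G.Adj v w → col v w < s) ∧
    (∀ v w x y, G.Adj v w → G.Adj x y → col v w = col x y →
      ¬ (f v < f x ∧ f x < f w ∧ f w < f y))

namespace SNLPW
open Finset

noncomputable def greedy {V : Type*} [Fintype V] (inn : V → ℕ) (Q : V → V → Prop) (v : V) : ℕ :=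
  sInf {n | ∀ u, inn u < inn v → Q u v → greedy inn Q u ≠ n}
termination_by inn v

lemma greedy_spec {V : Type*} [Fintype V] (inn : V → ℕ) (Q : V → V → Prop) (v : V) :
    ∀ u, inn u < inn v → Q u v → greedy inn Q u ≠ greedy inn Q v := by
  classical
  have hne : {n | ∀ u, inn u < inn v → Q u v → greedy inn Q u ≠ n}.Nonempty := by
    refine ⟨(Finset.univ.image (greedy inn Q)).sup id + 1, fun u _ _ => ?_⟩
    have : greedy inn Q u ≤ (Finset.univ.image (greedy inn Q)).sup id :=
      Finset.le_sup (f := id) (Finset.mem_image_of_mem _ (Finset.mem_univ u))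
    omega
  have h := Nat.sInf_mem hne
  rw [greedy]
  exact h

lemma greedy_lt {V : Type*} [Fintype V] [DecidableEq V] (inn : V → ℕ) (Q : V → V → Prop) (v : V)
    {k : ℕ} (T : Finset V) (hT : ∀ u, inn u < inn v → Q u v → u ∈ T) (hcard : T.card < k) :
    greedy inn Q v < k := by
  classical
  obtain ⟨n, hn, hn2⟩ : ∃ n ∈ Finset.range k, n ∉ T.image (greedy inn Q) := by
    by_contra hc
    push_neg at hc
    have := Finset.card_le_card hc
    have h2 := Finset.card_image_le (s := T) (f := greedy inn Q)
    simp [Finset.card_range] at this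
    omega
  have hn' : n ∈ {n | ∀ u, inn u < inn v → Q u v → greedy inn Q u ≠ n} := by
    intro u h1 h2 he
    exact hn2 (Finset.mem_image.mpr ⟨u, hT u h1 h2, he⟩)
  rw [greedy]
  exact lt_of_le_of_lt (Nat.sInf_le hn') (Finset.mem_range.mp hn)

def par (l : ℤ) : ℕ := if l % 2 = 0 then 0 else 1

lemma par_le (l : ℤ) : par l ≤ 1 := by unfold par; split <;> omega

lemma par_succ (l : ℤ) : par (l + 1) ≠ par l := by
  unfold par; split_ifs with h1 h2 h2 <;> omega

lemma decode {k t1 t2 a1 a2 : ℕ} (h1 : t1 < k) (h2 : t2 < k)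
    (h : t1 + k * a1 = t2 + k * a2) : t1 = t2 ∧ a1 = a2 := by
  have ha : a1 = a2 := by
    rcases lt_trichotomy a1 a2 with hl | hl | hl
    · exfalso
      have h3 : k * (a1 + 1) ≤ k * a2 := Nat.mul_le_mul_left k hl
      rw [Nat.mul_succ] at h3
      omega
    · exact hl
    · exfalso
      have h3 : k * (a2 + 1) ≤ k * a1 := Nat.mul_le_mul_left k hl
      rw [Nat.mul_succ] at h3
      omega
  subst ha
  omega

lemma colbound {k c a : ℕ} (hc : c < k) (ha : a ≤ 3) : c + k * a < 4 * k := by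
  have h1 : k * a ≤ k * 3 := Nat.mul_le_mul_left k ha
  omega

section
variable {V : Type*} [Fintype V] [DecidableEq V] [Nonempty V] {p : ℕ}
  (ℓ : V → ℤ) (B : Fin p → Finset V) (hmem : ∀ v, ∃ i, v ∈ B i)

noncomputable def fb (v : V) : Fin p :=
  (Finset.univ.filter (fun i => v ∈ B i)).min'
    ⟨(hmem v).choose, by simpa using (hmem v).choose_spec⟩

lemma mem_fb (v : V) : v ∈ B (fb B hmem v) := by
  have := Finset.min'_mem (Finset.univ.filter (fun i => v ∈ B i))
    ⟨(hmem v).choose, by simpa using (hmem v).choose_spec⟩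
  simpa [fb] using this

lemma fb_le {v : V} {m : Fin p} (h : v ∈ B m) : fb B hmem v ≤ m :=
  Finset.min'_le _ _ (by simpa using h)

noncomputable def enc (v : V) : ℕ := ((Fintype.equivFin V) v : ℕ)

lemma enc_lt (v : V) : enc v < Fintype.card V := ((Fintype.equivFin V) v).isLt

lemma enc_inj : Function.Injective (enc (V := V)) := by
  intro u v h
  have := (Fintype.equivFin V).injective (Fin.ext h)
  exact this

noncomputable def inn (v : V) : ℕ := (fb B hmem v : ℕ) * Fintype.card V + enc v

lemma inn_inj : Function.Injective (inn B hmem) := by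
  intro u v h
  apply enc_inj
  have hu := enc_lt u
  have hv := enc_lt v
  have h1 : (inn B hmem u) % Fintype.card V = enc u := by
    simp only [inn]
    rw [Nat.add_comm, Nat.add_mul_mod_self_right, Nat.mod_eq_of_lt hu]
  have h2 : (inn B hmem v) % Fintype.card V = enc v := by
    simp only [inn]
    rw [Nat.add_comm, Nat.add_mul_mod_self_right, Nat.mod_eq_of_lt hv]
  rw [← h1, ← h2, h]

lemma inn_lt (v : V) : inn B hmem v < p * Fintype.card V := by
  have h1 : (fb B hmem v : ℕ) + 1 ≤ p := (fb B hmem v).isLt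
  have h2 := enc_lt v
  have : ((fb B hmem v : ℕ) + 1) * Fintype.card V ≤ p * Fintype.card V :=
    Nat.mul_le_mul_right _ h1
  calc inn B hmem v < (fb B hmem v : ℕ) * Fintype.card V + Fintype.card V := by
        simpa [inn] using h2
    _ = ((fb B hmem v : ℕ) + 1) * Fintype.card V := by ring
    _ ≤ _ := this

lemma fb_mono {u v : V} (h : inn B hmem u < inn B hmem v) : fb B hmem u ≤ fb B hmem v := by
  by_contra hc
  push_neg at hc
  have hc' : (fb B hmem v : ℕ) + 1 ≤ (fb B hmem u : ℕ) := hc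
  have h2 := enc_lt v
  have : ((fb B hmem v : ℕ) + 1) * Fintype.card V ≤ (fb B hmem u : ℕ) * Fintype.card V :=
    Nat.mul_le_mul_right _ hc'
  have : inn B hmem v < inn B hmem u := by
    calc inn B hmem v < (fb B hmem v : ℕ) * Fintype.card V + Fintype.card V := by
          simpa [inn] using h2
      _ = ((fb B hmem v : ℕ) + 1) * Fintype.card V := by ring
      _ ≤ (fb B hmem u : ℕ) * Fintype.card V := this
      _ ≤ inn B hmem u := Nat.le_add_right _ _
  omega

noncomputable def sg (v : V) : ℤ :=
  if ℓ v % 2 = 0 then (inn B hmem v : ℤ) else -(inn B hmem v : ℤ)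

noncomputable def minL : ℤ := Finset.univ.inf' Finset.univ_nonempty ℓ

lemma minL_le (v : V) : minL ℓ ≤ ℓ v := Finset.inf'_le _ (Finset.mem_univ v)

noncomputable def PN : ℤ := (p * Fintype.card V : ℕ)

noncomputable def g (v : V) : ℤ :=
  (ℓ v - minL ℓ) * (2 * PN (V := V) (p := p) + 1) + sg ℓ B hmem v + PN (V := V) (p := p)

noncomputable def fo (v : V) : ℕ := (g ℓ B hmem v).toNat

lemma sg_bound (v : V) : -(PN (V := V) (p := p)) < sg ℓ B hmem v ∧
    sg ℓ B hmem v < PN (V := V) (p := p) := by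
  have h := inn_lt B hmem v
  have h' : (inn B hmem v : ℤ) < PN (V := V) (p := p) := by
    simp only [PN]
    exact_mod_cast h
  have h0 : (0 : ℤ) ≤ (inn B hmem v : ℤ) := Int.ofNat_nonneg _
  unfold sg
  split <;> constructor <;> omega

lemma g_nonneg (v : V) : 0 ≤ g ℓ B hmem v := by
  have h1 := minL_le ℓ v
  have h2 := sg_bound ℓ B hmem v
  have h3 : (0:ℤ) ≤ (ℓ v - minL ℓ) * (2 * PN (V := V) (p := p) + 1) := by
    apply mul_nonneg (by omega)
    have : (0:ℤ) ≤ PN (V := V) (p := p) := Int.ofNat_nonneg _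
    omega
  unfold g
  omega

lemma g_lt_iff (u v : V) : g ℓ B hmem u < g ℓ B hmem v ↔
    (ℓ u < ℓ v ∨ (ℓ u = ℓ v ∧ sg ℓ B hmem u < sg ℓ B hmem v)) := by
  have hu := sg_bound ℓ B hmem u
  have hv := sg_bound ℓ B hmem v
  have hmu := minL_le ℓ u
  have hmv := minL_le ℓ v
  have hPN : (0:ℤ) ≤ PN (V := V) (p := p) := Int.ofNat_nonneg _
  constructor
  · intro h
    rcases lt_trichotomy (ℓ u) (ℓ v) with h1 | h1 | h1
    · exact Or.inl h1
    · refine Or.inr ⟨h1, ?_⟩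
      unfold g at h
      rw [h1] at h
      omega
    · exfalso
      have key : (ℓ v - minL ℓ) + 1 ≤ (ℓ u - minL ℓ) := by omega
      have h2 : ((ℓ v - minL ℓ) + 1) * (2 * PN (V := V) (p := p) + 1) ≤
          (ℓ u - minL ℓ) * (2 * PN (V := V) (p := p) + 1) :=
        mul_le_mul_of_nonneg_right key (by omega)
      have hexp : (ℓ v - minL ℓ) * (2 * PN (V := V) (p := p) + 1) +
          (2 * PN (V := V) (p := p) + 1) ≤
          (ℓ u - minL ℓ) * (2 * PN (V := V) (p := p) + 1) := by linarith [h2]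
      unfold g at h
      omega
  · intro h
    rcases h with h1 | ⟨h1, h2⟩
    · have key : (ℓ u - minL ℓ) + 1 ≤ (ℓ v - minL ℓ) := by omega
      have h2 : ((ℓ u - minL ℓ) + 1) * (2 * PN (V := V) (p := p) + 1) ≤
          (ℓ v - minL ℓ) * (2 * PN (V := V) (p := p) + 1) :=
        mul_le_mul_of_nonneg_right key (by omega)
      have hexp : (ℓ u - minL ℓ) * (2 * PN (V := V) (p := p) + 1) +
          (2 * PN (V := V) (p := p) + 1) ≤
          (ℓ v - minL ℓ) * (2 * PN (V := V) (p := p) + 1) := by linarith [h2]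
      unfold g
      omega
    · unfold g
      rw [h1]
      omega

lemma fo_lt_iff (u v : V) : fo ℓ B hmem u < fo ℓ B hmem v ↔
    (ℓ u < ℓ v ∨ (ℓ u = ℓ v ∧ sg ℓ B hmem u < sg ℓ B hmem v)) := by
  rw [← g_lt_iff ℓ B hmem u v]
  have h1 := g_nonneg ℓ B hmem u
  have h2 := g_nonneg ℓ B hmem v
  unfold fo
  omega

lemma sg_inj {u v : V} (hl : ℓ u = ℓ v) (h : sg ℓ B hmem u = sg ℓ B hmem v) : u = v := by
  apply inn_inj B hmem
  unfold sg at h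
  rw [hl] at h
  split at h <;> omega

lemma fo_inj : Function.Injective (fo ℓ B hmem) := by
  intro u v h
  by_contra hne
  rcases lt_trichotomy (ℓ u) (ℓ v) with h1 | h1 | h1
  · have := (fo_lt_iff ℓ B hmem u v).mpr (Or.inl h1); omega
  · rcases lt_trichotomy (sg ℓ B hmem u) (sg ℓ B hmem v) with h2 | h2 | h2
    · have := (fo_lt_iff ℓ B hmem u v).mpr (Or.inr ⟨h1, h2⟩); omega
    · exact hne (sg_inj ℓ B hmem h1 h2)
    · have := (fo_lt_iff ℓ B hmem v u).mpr (Or.inr ⟨h1.symm, h2⟩); omega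
  · have := (fo_lt_iff ℓ B hmem v u).mpr (Or.inl h1); omega

lemma layer_le {u v : V} (h : fo ℓ B hmem u < fo ℓ B hmem v) : ℓ u ≤ ℓ v := by
  rcases (fo_lt_iff ℓ B hmem u v).mp h with h1 | ⟨h1, _⟩ <;> omega

lemma asc {u v : V} (h : fo ℓ B hmem u < fo ℓ B hmem v) (hl : ℓ u = ℓ v)
    (he : ℓ u % 2 = 0) : inn B hmem u < inn B hmem v := by
  rcases (fo_lt_iff ℓ B hmem u v).mp h with h1 | ⟨_, h1⟩
  · omega
  · have he' : ℓ v % 2 = 0 := by rw [← hl]; exact he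
    unfold sg at h1
    rw [if_pos he, if_pos he'] at h1
    exact_mod_cast h1

lemma desc {u v : V} (h : fo ℓ B hmem u < fo ℓ B hmem v) (hl : ℓ u = ℓ v)
    (he : ¬ ℓ u % 2 = 0) : inn B hmem v < inn B hmem u := by
  rcases (fo_lt_iff ℓ B hmem u v).mp h with h1 | ⟨_, h1⟩
  · omega
  · have he' : ¬ ℓ v % 2 = 0 := by rw [← hl]; exact he
    unfold sg at h1
    rw [if_neg he, if_neg he'] at h1
    omega

def Qr (u v : V) : Prop := ℓ u = ℓ v ∧ ∃ m, u ∈ B m ∧ v ∈ B m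

noncomputable def cg : V → ℕ := greedy (inn B hmem) (Qr ℓ B)

lemma cg_ne {u v : V} (h1 : u ≠ v) (h2 : ℓ u = ℓ v) (h3 : ∃ m, u ∈ B m ∧ v ∈ B m) :
    cg ℓ B hmem u ≠ cg ℓ B hmem v := by
  rcases lt_trichotomy (inn B hmem u) (inn B hmem v) with hlt | heq | hgt
  · exact greedy_spec (inn B hmem) (Qr ℓ B) v u hlt ⟨h2, h3⟩
  · exact absurd (inn_inj B hmem heq) h1
  · refine (greedy_spec (inn B hmem) (Qr ℓ B) u v hgt ⟨h2.symm, ?_⟩).symm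
    obtain ⟨m, hm1, hm2⟩ := h3
    exact ⟨m, hm2, hm1⟩

noncomputable def minEnd (v w : V) : V :=
  if inn B hmem v ≤ inn B hmem w then v else w

lemma minEnd_symm {v w : V} (h : v ≠ w) : minEnd B hmem v w = minEnd B hmem w v := by
  unfold minEnd
  rcases lt_trichotomy (inn B hmem v) (inn B hmem w) with h1 | h1 | h1
  · rw [if_pos h1.le, if_neg (not_le.mpr h1)]
  · exact absurd (inn_inj B hmem h1) h
  · rw [if_neg (not_le.mpr h1), if_pos h1.le]

noncomputable def col (k : ℕ) (v w : V) : ℕ :=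
  if ℓ v = ℓ w then cg ℓ B hmem (minEnd B hmem v w) + k * par (ℓ v)
  else if ℓ v < ℓ w then
    (if fb B hmem v ≤ fb B hmem w then cg ℓ B hmem v + k * par (ℓ v)
     else cg ℓ B hmem w + k * (2 + par (ℓ v)))
  else
    (if fb B hmem w ≤ fb B hmem v then cg ℓ B hmem w + k * par (ℓ w)
     else cg ℓ B hmem v + k * (2 + par (ℓ w)))

lemma col_symm {v w : V} (k : ℕ) (h : v ≠ w) : col ℓ B hmem k v w = col ℓ B hmem k w v := by
  unfold col
  rcases lt_trichotomy (ℓ v) (ℓ w) with h1 | h1 | h1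
  · rw [if_neg (by omega : ¬ ℓ v = ℓ w), if_neg (by omega : ¬ ℓ w = ℓ v),
      if_pos h1, if_neg (by omega : ¬ ℓ w < ℓ v)]
  · rw [if_pos h1, if_pos h1.symm, minEnd_symm B hmem h, h1]
  · rw [if_neg (by omega : ¬ ℓ v = ℓ w), if_neg (by omega : ¬ ℓ w = ℓ v),
      if_neg (by omega : ¬ ℓ v < ℓ w), if_pos h1]

variable (hint : ∀ v (i j k : Fin p), i ≤ j → j ≤ k → v ∈ B i → v ∈ B k → v ∈ B j)
include hint

lemma mem_of_between {v : V} {m m' : Fin p} (h1 : fb B hmem v ≤ m) (h2 : m ≤ m')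
    (h3 : v ∈ B m') : v ∈ B m :=
  hint v (fb B hmem v) m m' h1 h2 (mem_fb B hmem v) h3

lemma share_of {a b : V} {m : Fin p} (ha : a ∈ B m) (h1 : fb B hmem b ≤ m)
    (h2 : fb B hmem a ≤ fb B hmem b) : ∃ m', a ∈ B m' ∧ b ∈ B m' :=
  ⟨fb B hmem b, mem_of_between B hmem hint h2 h1 ha, mem_fb B hmem b⟩


variable (hwidth : ∀ (i : ℤ) (j : Fin p), ((B j).filter fun v => ℓ v = i).card ≤ k)

lemma cg_lt {k : ℕ} (hwidth : ∀ (i : ℤ) (j : Fin p), ((B j).filter fun v => ℓ v = i).card ≤ k)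
    (v : V) : cg ℓ B hmem v < k := by
  classical
  apply greedy_lt (inn B hmem) (Qr ℓ B) v
      (T := ((B (fb B hmem v)).filter (fun u => ℓ u = ℓ v)).erase v)
  · intro u h1 h2
    obtain ⟨hl, m, hum, hvm⟩ := h2
    refine Finset.mem_erase.mpr ⟨fun he => by subst he; omega, ?_⟩
    refine Finset.mem_filter.mpr ⟨?_, hl⟩
    exact mem_of_between B hmem hint (fb_mono B hmem h1) (fb_le B hmem hvm) hum
  · have hv : v ∈ (B (fb B hmem v)).filter (fun u => ℓ u = ℓ v) :=
      Finset.mem_filter.mpr ⟨mem_fb B hmem v, rfl⟩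
    have h1 : 1 ≤ ((B (fb B hmem v)).filter (fun u => ℓ u = ℓ v)).card :=
      Finset.card_pos.mpr ⟨v, hv⟩
    have h2 := hwidth (ℓ v) (fb B hmem v)
    rw [Finset.card_erase_of_mem hv]
    omega

lemma col_lt {k : ℕ} (hwidth : ∀ (i : ℤ) (j : Fin p), ((B j).filter fun v => ℓ v = i).card ≤ k)
    (v w : V) : col ℓ B hmem k v w < 4 * k := by
  have hc : ∀ u : V, cg ℓ B hmem u < k := cg_lt ℓ B hmem hint hwidth
  unfold col
  split_ifs <;>
    exact colbound (hc _) (by first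
      | exact (par_le _).trans (by omega)
      | · have := par_le (ℓ v); omega
      | · have := par_le (ℓ w); omega)

lemma nocross {k : ℕ} (hwidth : ∀ (i : ℤ) (j : Fin p), ((B j).filter fun v => ℓ v = i).card ≤ k)
    {v w x y : V}
    (hlvw : |ℓ v - ℓ w| ≤ 1) (hlxy : |ℓ x - ℓ y| ≤ 1)
    {m1 : Fin p} (hm1v : v ∈ B m1) (hm1w : w ∈ B m1)
    {m2 : Fin p} (hm2x : x ∈ B m2) (hm2y : y ∈ B m2)
    (hcol : col ℓ B hmem k v w = col ℓ B hmem k x y)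
    (h1 : fo ℓ B hmem v < fo ℓ B hmem x) (h2 : fo ℓ B hmem x < fo ℓ B hmem w)
    (h3 : fo ℓ B hmem w < fo ℓ B hmem y) : False := by
  rw [abs_le] at hlvw hlxy
  have hvx := layer_le ℓ B hmem h1
  have hxw := layer_le ℓ B hmem h2
  have hwy := layer_le ℓ B hmem h3
  have dvx : v ≠ x := fun h => Nat.ne_of_lt h1 (congrArg _ h)
  have dxw : x ≠ w := fun h => Nat.ne_of_lt h2 (congrArg _ h)
  have dwy : w ≠ y := fun h => Nat.ne_of_lt h3 (congrArg _ h)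
  have hck : ∀ u : V, cg ℓ B hmem u < k := cg_lt ℓ B hmem hint hwidth
  by_cases e1 : ℓ v = ℓ w <;> by_cases e2 : ℓ x = ℓ y
  · -- intra / intra
    have hx : ℓ x = ℓ v := by omega
    have hy : ℓ y = ℓ v := by omega
    unfold col at hcol
    rw [if_pos e1, if_pos e2] at hcol
    by_cases hp : ℓ v % 2 = 0
    · have i1 : inn B hmem v < inn B hmem x := asc ℓ B hmem h1 hx.symm hp
      have i2 : inn B hmem x < inn B hmem w := asc ℓ B hmem h2 (by omega) (by omega)
      have i3 : inn B hmem w < inn B hmem y := asc ℓ B hmem h3 (by omega) (by omega)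
      have hm : minEnd B hmem v w = v := if_pos (i1.trans i2).le
      have hm' : minEnd B hmem x y = x := if_pos (i2.trans i3).le
      rw [hm, hm'] at hcol
      obtain ⟨ht, -⟩ := decode (hck _) (hck _) hcol
      have hs : ∃ m', v ∈ B m' ∧ x ∈ B m' :=
        share_of B hmem hint hm1v ((fb_mono B hmem i2).trans (fb_le B hmem hm1w))
          (fb_mono B hmem i1)
      exact cg_ne ℓ B hmem dvx hx.symm hs ht
    · have i1 : inn B hmem x < inn B hmem v := desc ℓ B hmem h1 hx.symm hp
      have i2 : inn B hmem w < inn B hmem x := desc ℓ B hmem h2 (by omega) (by omega)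
      have i3 : inn B hmem y < inn B hmem w := desc ℓ B hmem h3 (by omega) (by omega)
      have hm : minEnd B hmem v w = w := if_neg (not_le.mpr (i2.trans i1))
      have hm' : minEnd B hmem x y = y := if_neg (not_le.mpr (i3.trans i2))
      rw [hm, hm'] at hcol
      obtain ⟨ht, -⟩ := decode (hck _) (hck _) hcol
      have hs : ∃ m', y ∈ B m' ∧ w ∈ B m' :=
        share_of B hmem hint hm2y ((fb_mono B hmem i2).trans (fb_le B hmem hm2x))
          (fb_mono B hmem i3)
      exact cg_ne ℓ B hmem (Ne.symm dwy) (by omega) hs ht.symm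
  · -- intra / inter
    have hx : ℓ x = ℓ v := by omega
    have hy : ℓ y = ℓ x + 1 := by omega
    unfold col at hcol
    rw [if_pos e1, if_neg e2, if_pos (show ℓ x < ℓ y by omega)] at hcol
    by_cases cb : fb B hmem x ≤ fb B hmem y
    · rw [if_pos cb] at hcol
      by_cases hp : ℓ v % 2 = 0
      · have i1 : inn B hmem v < inn B hmem x := asc ℓ B hmem h1 hx.symm hp
        have i2 : inn B hmem x < inn B hmem w := asc ℓ B hmem h2 (by omega) (by omega)
        have hm : minEnd B hmem v w = v := if_pos (i1.trans i2).le
        rw [hm] at hcol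
        obtain ⟨ht, -⟩ := decode (hck _) (hck _) hcol
        have hs : ∃ m', v ∈ B m' ∧ x ∈ B m' :=
          share_of B hmem hint hm1v ((fb_mono B hmem i2).trans (fb_le B hmem hm1w))
            (fb_mono B hmem i1)
        exact cg_ne ℓ B hmem dvx hx.symm hs ht
      · have i1 : inn B hmem x < inn B hmem v := desc ℓ B hmem h1 hx.symm hp
        have i2 : inn B hmem w < inn B hmem x := desc ℓ B hmem h2 (by omega) (by omega)
        have hm : minEnd B hmem v w = w := if_neg (not_le.mpr (i2.trans i1))
        rw [hm] at hcol
        obtain ⟨ht, -⟩ := decode (hck _) (hck _) hcol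
        have hs : ∃ m', w ∈ B m' ∧ x ∈ B m' :=
          share_of B hmem hint hm1w ((fb_mono B hmem i1).trans (fb_le B hmem hm1v))
            (fb_mono B hmem i2)
        exact cg_ne ℓ B hmem (Ne.symm dxw) (by omega) hs ht
    · rw [if_neg cb] at hcol
      obtain ⟨-, ha⟩ := decode (hck _) (hck _) hcol
      have := par_le (ℓ v)
      omega
  · -- inter / intra
    have hw : ℓ w = ℓ v + 1 := by omega
    have hx : ℓ x = ℓ w := by omega
    unfold col at hcol
    rw [if_neg e1, if_pos (show ℓ v < ℓ w by omega), if_pos e2] at hcol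
    have hps : par (ℓ x) ≠ par (ℓ v) := by rw [hx, hw]; exact par_succ (ℓ v)
    have hpl1 := par_le (ℓ v)
    have hpl2 := par_le (ℓ x)
    by_cases cb : fb B hmem v ≤ fb B hmem w
    · rw [if_pos cb] at hcol
      obtain ⟨-, ha⟩ := decode (hck _) (hck _) hcol
      omega
    · rw [if_neg cb] at hcol
      obtain ⟨-, ha⟩ := decode (hck _) (hck _) hcol
      omega
  · -- inter / inter
    have hw : ℓ w = ℓ v + 1 := by omega
    have hy : ℓ y = ℓ x + 1 := by omega
    unfold col at hcol
    rw [if_neg e1, if_pos (show ℓ v < ℓ w by omega), if_neg e2,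
      if_pos (show ℓ x < ℓ y by omega)] at hcol
    by_cases hx : ℓ x = ℓ v
    case neg =>
      have hx1 : ℓ x = ℓ v + 1 := by omega
      have hps : par (ℓ x) ≠ par (ℓ v) := by rw [hx1]; exact par_succ (ℓ v)
      have hpl1 := par_le (ℓ v)
      have hpl2 := par_le (ℓ x)
      by_cases cb1 : fb B hmem v ≤ fb B hmem w <;>
        by_cases cb2 : fb B hmem x ≤ fb B hmem y <;>
        [rw [if_pos cb1, if_pos cb2] at hcol; rw [if_pos cb1, if_neg cb2] at hcol;
         rw [if_neg cb1, if_pos cb2] at hcol; rw [if_neg cb1, if_neg cb2] at hcol] <;>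
        · obtain ⟨-, ha⟩ := decode (hck _) (hck _) hcol
          omega
    case pos =>
      have hyw : ℓ y = ℓ w := by omega
      have hpl1 := par_le (ℓ v)
      have hpl2 := par_le (ℓ x)
      by_cases cb1 : fb B hmem v ≤ fb B hmem w <;> by_cases cb2 : fb B hmem x ≤ fb B hmem y
      · -- both class B
        rw [if_pos cb1, if_pos cb2] at hcol
        obtain ⟨ht, -⟩ := decode (hck _) (hck _) hcol
        by_cases hp : ℓ v % 2 = 0
        · have i1 : inn B hmem v < inn B hmem x := asc ℓ B hmem h1 hx.symm hp
          have i2 : inn B hmem y < inn B hmem w := desc ℓ B hmem h3 hyw.symm (by omega)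
          have hs : ∃ m', v ∈ B m' ∧ x ∈ B m' :=
            share_of B hmem hint hm1v
              (cb2.trans ((fb_mono B hmem i2).trans (fb_le B hmem hm1w)))
              (fb_mono B hmem i1)
          exact cg_ne ℓ B hmem dvx hx.symm hs ht
        · have i1 : inn B hmem x < inn B hmem v := desc ℓ B hmem h1 hx.symm hp
          have i2 : inn B hmem w < inn B hmem y := asc ℓ B hmem h3 hyw.symm (by omega)
          have hs : ∃ m', x ∈ B m' ∧ v ∈ B m' :=
            share_of B hmem hint hm2x
              (cb1.trans ((fb_mono B hmem i2).trans (fb_le B hmem hm2y)))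
              (fb_mono B hmem i1)
          exact cg_ne ℓ B hmem (Ne.symm dvx) hx hs ht.symm
      · rw [if_pos cb1, if_neg cb2] at hcol
        obtain ⟨-, ha⟩ := decode (hck _) (hck _) hcol
        omega
      · rw [if_neg cb1, if_pos cb2] at hcol
        obtain ⟨-, ha⟩ := decode (hck _) (hck _) hcol
        omega
      · -- both class T
        rw [if_neg cb1, if_neg cb2] at hcol
        obtain ⟨ht, -⟩ := decode (hck _) (hck _) hcol
        push_neg at cb1 cb2
        by_cases hp : ℓ v % 2 = 0
        · have i1 : inn B hmem v < inn B hmem x := asc ℓ B hmem h1 hx.symm hp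
          have i2 : inn B hmem y < inn B hmem w := desc ℓ B hmem h3 hyw.symm (by omega)
          have hs : ∃ m', y ∈ B m' ∧ w ∈ B m' :=
            share_of B hmem hint hm2y
              (cb1.le.trans ((fb_mono B hmem i1).trans (fb_le B hmem hm2x)))
              (fb_mono B hmem i2)
          exact cg_ne ℓ B hmem (Ne.symm dwy) (by omega) hs ht.symm
        · have i1 : inn B hmem x < inn B hmem v := desc ℓ B hmem h1 hx.symm hp
          have i2 : inn B hmem w < inn B hmem y := asc ℓ B hmem h3 hyw.symm (by omega)
          have hs : ∃ m', w ∈ B m' ∧ y ∈ B m' :=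
            share_of B hmem hint hm1w
              (cb2.le.trans ((fb_mono B hmem i1).trans (fb_le B hmem hm1v)))
              (fb_mono B hmem i2)
          exact cg_ne ℓ B hmem dwy hyw.symm hs ht

end
end SNLPW

/-- for every graph `G`, `sn(G) ≤ 4 · lpw(G)`. -/
theorem stack_number_le_four_mul_layered_pathwidth
    {V : Type*} (G : SimpleGraph V) (k : ℕ) (h : LPWle G k) :
    StackLayoutLE G (4 * k) := by
  classical
  obtain ⟨ℓ, p, B, hlay, hpd, hwidth⟩ := h
  by_cases hV : Nonempty V
  case neg =>
    exact ⟨fun _ => 0, fun _ _ => 0, fun a => (hV ⟨a⟩).elim,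
      fun v _ _ => (hV ⟨v⟩).elim, fun v _ _ => (hV ⟨v⟩).elim,
      fun v _ _ _ _ _ _ => (hV ⟨v⟩).elim⟩
  case pos =>
    haveI := hV
    have hfin : (Set.univ : Set V).Finite := by
      apply Set.Finite.subset (Finset.univ.biUnion B).finite_toSet
      intro v _
      obtain ⟨i, hi⟩ := hpd.mem_bag v
      simp only [Finset.coe_biUnion, Finset.mem_coe, Finset.mem_univ, Set.mem_iUnion,
        Set.iUnion_true]
      exact ⟨i, hi⟩
    haveI : Finite V := Set.finite_univ_iff.mp hfin
    cases nonempty_fintype V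
    refine ⟨SNLPW.fo ℓ B hpd.mem_bag, SNLPW.col ℓ B hpd.mem_bag k,
      SNLPW.fo_inj ℓ B hpd.mem_bag, ?_, ?_, ?_⟩
    · intro v w hadj
      exact SNLPW.col_symm ℓ B hpd.mem_bag k hadj.ne
    · intro v w _
      exact SNLPW.col_lt ℓ B hpd.mem_bag hpd.interval hwidth v w
    · intro v w x y hadj1 hadj2 hcol hcr
      obtain ⟨a, b, c⟩ := hcr
      obtain ⟨m1, hm1v, hm1w⟩ := hpd.edge_bag v w hadj1
      obtain ⟨m2, hm2x, hm2y⟩ := hpd.edge_bag x y hadj2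
      exact SNLPW.nocross ℓ B hpd.mem_bag hpd.interval hwidth (hlay v w hadj1)
        (hlay x y hadj2) hm1v hm1w hm2x hm2y hcol a b c
end

section
/- For every graph G and every positive integer s, the layered pathwidth of G is at most s times the s-weak layered pathwidth of G: lpw(G) ≤ s·lpw_s(G). -/
/-- An `s`-weak layering: layers of adjacent vertices differ by at most `s`. -/
def IsWeakLayering {V : Type*} (G : SimpleGraph V) (s : ℕ) (ℓ : V → ℤ) : Prop :=
  ∀ v w, G.Adj v w → |ℓ v - ℓ w| ≤ (s : ℤ)

/-- `G` has `s`-weak layered pathwidth at most `k`. -/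
def WeakLPWle {V : Type*} (G : SimpleGraph V) (s k : ℕ) : Prop :=
  ∃ (ℓ : V → ℤ) (p : ℕ) (B : Fin p → Finset V),
    IsWeakLayering G s ℓ ∧ IsPathDecomp G p B ∧ LayeredWidthLE ℓ p B k

/-- `lpw(G) ≤ s · lpw_s(G)` for every graph `G` and positive `s`. -/
theorem lpw_le_s_mul_weak_lpw
    {V : Type*} (G : SimpleGraph V) (s k : ℕ) (hs : 0 < s)
    (h : WeakLPWle G s k) :
    LPWle G (s * k) := by
  classical
  obtain ⟨ℓ, p, B, hw, hpd, hwid⟩ := h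
  have hs' : (0:ℤ) < s := by exact_mod_cast hs
  refine ⟨fun v => ℓ v / s, p, B, ?_, hpd, ?_⟩
  · intro v w hvw
    have h1 := hw v w hvw
    rw [abs_le] at h1 ⊢
    obtain ⟨ha, hb⟩ := h1
    constructor
    · have h2 : ℓ w + (-1) * s ≤ ℓ v := by linarith
      have h3 := Int.ediv_le_ediv hs' h2
      rw [Int.add_mul_ediv_right _ _ hs'.ne'] at h3
      linarith
    · have h2 : ℓ v ≤ ℓ w + 1 * s := by linarith
      have h3 := Int.ediv_le_ediv hs' h2
      rw [Int.add_mul_ediv_right _ _ hs'.ne'] at h3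
      linarith
  · intro i j
    have hsub : ((B j).filter fun v => ℓ v / s = i) ⊆
        (Finset.range s).biUnion fun r => (B j).filter fun v => ℓ v = i * s + r := by
      intro v hv
      rw [Finset.mem_filter] at hv
      obtain ⟨hvB, hvi⟩ := hv
      rw [Finset.mem_biUnion]
      refine ⟨(ℓ v % s).toNat, ?_, ?_⟩
      · rw [Finset.mem_range]
        have h1 : ℓ v % s < s := Int.emod_lt_of_pos _ hs'
        omega
      · rw [Finset.mem_filter]
        refine ⟨hvB, ?_⟩
        have h0 : (0:ℤ) ≤ ℓ v % s := Int.emod_nonneg _ hs'.ne'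
        have h2 := Int.mul_ediv_add_emod (ℓ v) s
        rw [Int.toNat_of_nonneg h0]
        rw [hvi] at h2
        linarith
    calc ((B j).filter fun v => ℓ v / s = i).card
        ≤ ((Finset.range s).biUnion fun r => (B j).filter fun v => ℓ v = i * s + r).card :=
          Finset.card_le_card hsub
      _ ≤ ∑ r ∈ Finset.range s, ((B j).filter fun v => ℓ v = i * s + r).card :=
          Finset.card_biUnion_le
      _ ≤ ∑ _r ∈ Finset.range s, k := Finset.sum_le_sum fun r _ => hwid (i * s + r) j
      _ = s * k := by simp [Finset.sum_const, Finset.card_range, mul_comm]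
end

section
/- Any path decomposition of a graph G can be transformed into a left-normal path decomposition of G (one in which distinct vertices have distinct first bag indices) without increasing the layered width with respect to any fixed layering. -/
/-- A path decomposition is left-normal if no bag is the first bag of two
distinct vertices, i.e. distinct vertices have distinct first bag indices. -/
def LeftNormal {V : Type*} (p : ℕ) (B : Fin p → Finset V) : Prop :=
  ∀ v w, v ≠ w → ∀ i : Fin p, v ∈ B i → w ∈ B i →
    (∃ j, j < i ∧ v ∈ B j) ∨ (∃ j, j < i ∧ w ∈ B j)


namespace LNAux
variable {V : Type*} [DecidableEq V]

def BB (p : ℕ) (B : Fin p → Finset V) (n : ℕ) : Finset V :=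
  if h : n < p then B ⟨n, h⟩ else ∅

def lnD (p : ℕ) (B : Fin p → Finset V) (i : ℕ) : Finset V :=
  if i = 0 then ∅ else BB p B i ∩ BB p B (i - 1)

def lnS (p : ℕ) (B : Fin p → Finset V) (i : ℕ) : Finset V :=
  BB p B i \ lnD p B i

noncomputable def lnC (p : ℕ) (B : Fin p → Finset V) (i t : ℕ) : Finset V :=
  lnD p B i ∪ ((lnS p B i).toList.take t).toFinset

variable {p : ℕ} {B : Fin p → Finset V}

lemma lnD_subset (i : ℕ) : lnD p B i ⊆ BB p B i := by
  unfold lnD; split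
  · simp
  · exact Finset.inter_subset_left

lemma take_toFinset_subset (s : Finset V) (t : ℕ) :
    (s.toList.take t).toFinset ⊆ s := fun x hx => by
  have := List.take_subset t s.toList (List.mem_toFinset.mp hx)
  simpa using this

lemma lnC_subset (i t : ℕ) : lnC p B i t ⊆ BB p B i := by
  apply Finset.union_subset (lnD_subset i)
  exact (take_toFinset_subset _ _).trans (Finset.sdiff_subset)

lemma lnC_mono (i : ℕ) {t t' : ℕ} (h : t ≤ t') : lnC p B i t ⊆ lnC p B i t' := by
  apply Finset.union_subset_union_right
  intro x hx
  rw [List.mem_toFinset] at hx ⊢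
  have : (lnS p B i).toList.take t = ((lnS p B i).toList.take t').take t := by
    rw [List.take_take, Nat.min_eq_left h]
  rw [this] at hx
  exact List.take_subset _ _ hx

lemma lnC_eq_of_card_le (i t : ℕ) (h : (BB p B i).card ≤ t) :
    lnC p B i t = BB p B i := by
  have hS : (lnS p B i).card ≤ t :=
    le_trans (Finset.card_le_card (Finset.sdiff_subset)) h
  unfold lnC
  rw [List.take_of_length_le (by rwa [Finset.length_toList]), Finset.toList_toFinset]
  unfold lnS
  exact Finset.union_sdiff_of_subset (lnD_subset i)

omit [DecidableEq V] in
lemma BB_interval (hpd : ∀ v (i j k : Fin p), i ≤ j → j ≤ k → v ∈ B i → v ∈ B k → v ∈ B j)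
    {v : V} {a b c : ℕ} (hab : a ≤ b) (hbc : b ≤ c)
    (ha : v ∈ BB p B a) (hc : v ∈ BB p B c) : v ∈ BB p B b := by
  unfold BB at *
  split at hc
  · next hcp =>
    have hbp : b < p := lt_of_le_of_lt hbc hcp
    have hap : a < p := lt_of_le_of_lt hab hbp
    rw [dif_pos hap] at ha
    rw [dif_pos hbp]
    exact hpd v ⟨a, hap⟩ ⟨b, hbp⟩ ⟨c, ‹_›⟩ hab hbc ha hc
  · simp at hc

lemma mem_lnD (i : ℕ) (hi : i ≠ 0) {v : V} (h1 : v ∈ BB p B i) (h2 : v ∈ BB p B (i-1)) :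
    v ∈ lnD p B i := by
  unfold lnD; rw [if_neg hi]; exact Finset.mem_inter.mpr ⟨h1, h2⟩

end LNAux

open LNAux

/-- every path decomposition can be transformed into a left-normal
one without increasing the layered width with respect to any fixed layering. -/
theorem exists_leftNormal_path_decomp
    {V : Type*} (G : SimpleGraph V) (ℓ : V → ℤ) (p : ℕ) (B : Fin p → Finset V)
    (k : ℕ) (hpd : IsPathDecomp G p B) (hw : LayeredWidthLE ℓ p B k) :
    ∃ (q : ℕ) (B' : Fin q → Finset V),
      IsPathDecomp G q B' ∧ LeftNormal q B' ∧ LayeredWidthLE ℓ q B' k := by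
  classical
  obtain ⟨L, hcard⟩ : ∃ L : ℕ, ∀ n : ℕ, (BB p B n).card ≤ L := by
    refine ⟨Finset.univ.sup (fun i : Fin p => (B i).card), fun n => ?_⟩
    unfold BB
    split
    · exact Finset.le_sup (f := fun i : Fin p => (B i).card) (Finset.mem_univ _)
    · simp
  obtain ⟨M, hMdef⟩ : ∃ M : ℕ, M = L + 1 := ⟨L + 1, rfl⟩
  have hM : 0 < M := by omega
  -- full bags appear at the end of each chunk
  have hfull : ∀ i : Fin p, ∃ n : Fin (p * M),
      (n : ℕ) / M = (i : ℕ) ∧ (n : ℕ) % M = L := by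
    intro i
    have hmul : M * ((i : ℕ) + 1) ≤ M * p := Nat.mul_le_mul_left M i.isLt
    rw [Nat.mul_succ] at hmul
    have hpm : p * M = M * p := Nat.mul_comm p M
    have hn : M * (i : ℕ) + L < p * M := by omega
    refine ⟨⟨M * (i : ℕ) + L, hn⟩, ?_, ?_⟩
    · show (M * (i : ℕ) + L) / M = (i : ℕ)
      rw [Nat.mul_add_div hM, Nat.div_eq_of_lt (by omega), Nat.add_zero]
    · show (M * (i : ℕ) + L) % M = L
      rw [Nat.mul_add_mod, Nat.mod_eq_of_lt (by omega)]
  have hBBi : ∀ i : Fin p, BB p B (i : ℕ) = B i := by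
    intro i; unfold BB; rw [dif_pos i.isLt]
  refine ⟨p * M, fun j => lnC p B ((j : ℕ) / M) ((j : ℕ) % M), ?_, ?_, ?_⟩
  · constructor
    · -- mem_bag
      intro v
      obtain ⟨i, hi⟩ := hpd.mem_bag v
      obtain ⟨n, hd, hm⟩ := hfull i
      refine ⟨n, ?_⟩
      show v ∈ lnC p B ((n : ℕ) / M) ((n : ℕ) % M)
      rw [hd, hm, lnC_eq_of_card_le _ _ (hcard _), hBBi]
      exact hi
    · -- interval
      intro v a b c hab hbc ha hc
      replace ha : v ∈ lnC p B ((a : ℕ) / M) ((a : ℕ) % M) := ha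
      replace hc : v ∈ lnC p B ((c : ℕ) / M) ((c : ℕ) % M) := hc
      show v ∈ lnC p B ((b : ℕ) / M) ((b : ℕ) % M)
      have hab' : (a : ℕ) ≤ (b : ℕ) := hab
      have hbc' : (b : ℕ) ≤ (c : ℕ) := hbc
      have hdab : (a : ℕ) / M ≤ (b : ℕ) / M := Nat.div_le_div_right hab'
      have hdbc : (b : ℕ) / M ≤ (c : ℕ) / M := Nat.div_le_div_right hbc'
      have hBa : v ∈ BB p B ((a : ℕ) / M) := lnC_subset _ _ ha
      have hBc : v ∈ BB p B ((c : ℕ) / M) := lnC_subset _ _ hc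
      rcases eq_or_lt_of_le hdab with heq | hlt
      · have hrem : (a : ℕ) % M ≤ (b : ℕ) % M := by
          have h1 := Nat.div_add_mod (a : ℕ) M
          have h2 := Nat.div_add_mod (b : ℕ) M
          rw [heq] at h1
          omega
        rw [← heq]
        exact lnC_mono _ hrem ha
      · have hb0 : (b : ℕ) / M ≠ 0 := by
          intro h; rw [h] at hlt; exact absurd hlt (Nat.not_lt_zero _)
        have hb1 : v ∈ BB p B ((b : ℕ) / M) :=
          BB_interval hpd.interval hdab hdbc hBa hBc
        have hb2 : v ∈ BB p B ((b : ℕ) / M - 1) :=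
          BB_interval hpd.interval (Nat.le_sub_one_of_lt hlt)
            (le_trans (Nat.sub_le _ _) hdbc) hBa hBc
        exact Finset.mem_union_left _ (mem_lnD _ hb0 hb1 hb2)
    · -- edge_bag
      intro v w hvw
      obtain ⟨i, hvi, hwi⟩ := hpd.edge_bag v w hvw
      obtain ⟨n, hd, hm⟩ := hfull i
      refine ⟨n, ?_, ?_⟩ <;>
      · show _ ∈ lnC p B ((n : ℕ) / M) ((n : ℕ) % M)
        rw [hd, hm, lnC_eq_of_card_le _ _ (hcard _), hBBi]
        first | exact hvi | exact hwi
  · -- LeftNormal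
    intro v w hvw n hv hw'
    replace hv : v ∈ lnC p B ((n : ℕ) / M) ((n : ℕ) % M) := hv
    replace hw' : w ∈ lnC p B ((n : ℕ) / M) ((n : ℕ) % M) := hw'
    have hn_eq : M * ((n : ℕ) / M) + (n : ℕ) % M = (n : ℕ) := Nat.div_add_mod (n : ℕ) M
    have htM : (n : ℕ) % M < M := Nat.mod_lt _ hM
    have hpm : p * M = M * p := Nat.mul_comm p M
    have hip : (n : ℕ) / M < p := Nat.div_lt_of_lt_mul (by rw [← hpm]; exact n.isLt)
    have hnlt : (n : ℕ) < p * M := n.isLt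
    obtain ⟨i, hI⟩ : ∃ i, (n : ℕ) / M = i := ⟨_, rfl⟩
    obtain ⟨t, hT⟩ : ∃ t, (n : ℕ) % M = t := ⟨_, rfl⟩
    rw [hI] at hv hw' hn_eq hip
    rw [hT] at hv hw' hn_eq htM
    have hDcase : ∀ x : V, x ∈ lnD p B i → ∃ j : Fin (p * M), j < n ∧
        x ∈ lnC p B ((j : ℕ) / M) ((j : ℕ) % M) := by
      intro x hx
      have hi0 : i ≠ 0 := by
        intro h; unfold lnD at hx; rw [h] at hx; simp at hx
      have hmul : M * (i - 1) + M ≤ M * i := by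
        have h := Nat.mul_le_mul_left M (show (i - 1) + 1 ≤ i by omega)
        rwa [Nat.mul_succ] at h
      have hj : M * (i - 1) + L < p * M := by omega
      refine ⟨⟨M * (i - 1) + L, hj⟩, ?_, ?_⟩
      · show (M * (i - 1) + L : ℕ) < (n : ℕ)
        omega
      · have hdiv : (M * (i - 1) + L) / M = i - 1 := by
          rw [Nat.mul_add_div hM, Nat.div_eq_of_lt (by omega), Nat.add_zero]
        have hmod : (M * (i - 1) + L) % M = L := by
          rw [Nat.mul_add_mod, Nat.mod_eq_of_lt (by omega)]
        show x ∈ lnC p B _ _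
        rw [hdiv, hmod, lnC_eq_of_card_le _ _ (hcard _)]
        have hxx : x ∈ BB p B i ∩ BB p B (i - 1) := by
          unfold lnD at hx; rwa [if_neg hi0] at hx
        exact (Finset.mem_inter.mp hxx).2
    rcases Finset.mem_union.mp hv with hvD | hvT
    · exact Or.inl (hDcase v hvD)
    rcases Finset.mem_union.mp hw' with hwD | hwT
    · exact Or.inr (hDcase w hwD)
    rw [List.mem_toFinset] at hvT hwT
    have ht0 : t ≠ 0 := by
      intro h; rw [h] at hvT; simp at hvT
    obtain ⟨s, hs⟩ : ∃ s, t = s + 1 := ⟨t - 1, by omega⟩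
    rw [hs, List.take_succ] at hvT hwT
    have hTcase : ∀ x : V, x ∈ (lnS p B i).toList.take s →
        ∃ j : Fin (p * M), j < n ∧ x ∈ lnC p B ((j : ℕ) / M) ((j : ℕ) % M) := by
      intro x hx
      have hj : M * i + s < p * M := by omega
      refine ⟨⟨M * i + s, hj⟩, ?_, ?_⟩
      · show (M * i + s : ℕ) < (n : ℕ)
        omega
      · have hdiv : (M * i + s) / M = i := by
          rw [Nat.mul_add_div hM, Nat.div_eq_of_lt (by omega), Nat.add_zero]
        have hmod : (M * i + s) % M = s := by
          rw [Nat.mul_add_mod, Nat.mod_eq_of_lt (by omega)]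
        show x ∈ lnC p B _ _
        rw [hdiv, hmod]
        exact Finset.mem_union_right _ (List.mem_toFinset.mpr hx)
    rcases List.mem_append.mp hvT with hvs | hvlast
    · exact Or.inl (hTcase v hvs)
    rcases List.mem_append.mp hwT with hws | hwlast
    · exact Or.inr (hTcase w hws)
    · exact absurd (Option.mem_unique (Option.mem_toList.mp hvlast)
        (Option.mem_toList.mp hwlast)) hvw
  · -- width
    intro z j
    have hpm : p * M = M * p := Nat.mul_comm p M
    have hjp : (j : ℕ) / M < p := Nat.div_lt_of_lt_mul (by rw [← hpm]; exact j.isLt)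
    calc ((lnC p B ((j : ℕ) / M) ((j : ℕ) % M)).filter fun v => ℓ v = z).card
        ≤ ((BB p B ((j : ℕ) / M)).filter fun v => ℓ v = z).card :=
          Finset.card_le_card (Finset.filter_subset_filter _ (lnC_subset _ _))
      _ ≤ k := by
          unfold BB
          rw [dif_pos hjp]
          exact hw z _
end

section
/- Let G₁ and G₂ be graphs with V(G₁) ∩ V(G₂) = C, where C is a clique (or any common vertex set contained both in the last bag of a path decomposition of G₁ and the first bag of a path decomposition of G₂), and suppose every edge of G = G₁ ∪ G₂ lies in G₁ or G₂. If G₁ has a layered path decomposition of layered width at most k with C contained in the last bag, G₂ has a layered path decomposition of layered width at most k with C contained in the first bag, and the two layerings agree on C after shifting the second layering by a constant, then G has a layered path decomposition of layered width at most k obtained by concatenating the bag sequences and shifting the second layering. -/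
open scoped Classical in
/-- A path decomposition of the part of `G` induced on a vertex set `S`:
bags lie in `S`, cover `S`, vertices occupy intervals of bags, and every edge
of `G` with both endpoints in `S` is covered. -/
structure IsPathDecompOn {V : Type*} (G : SimpleGraph V) (S : Set V) (p : ℕ)
    (B : Fin p → Finset V) : Prop where
  bag_subset : ∀ i, ∀ v ∈ B i, v ∈ S
  mem_bag : ∀ v ∈ S, ∃ i, v ∈ B i
  interval : ∀ v (i j k : Fin p), i ≤ j → j ≤ k → v ∈ B i → v ∈ B k → v ∈ B j
  edge_bag : ∀ v w, G.Adj v w → v ∈ S → w ∈ S → ∃ i, v ∈ B i ∧ w ∈ B i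

open scoped Classical in
/-- gluing two layered path decompositions along a common vertex
set `C = V₁ ∩ V₂` contained in the last bag of the first decomposition and the
first bag of the second, whose layerings agree on `C` after shifting the
second by `r`, yields a layered path decomposition of the whole graph of the
same layered width. -/
theorem glue_layered_path_decompositions
    {V : Type*} (G : SimpleGraph V) (V₁ V₂ : Set V)
    (hcover : V₁ ∪ V₂ = Set.univ)
    (hedges : ∀ v w, G.Adj v w → (v ∈ V₁ ∧ w ∈ V₁) ∨ (v ∈ V₂ ∧ w ∈ V₂))
    (k : ℕ) (ℓ₁ ℓ₂ : V → ℤ) (r : ℤ)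
    (p q : ℕ) (hp : 0 < p) (hq : 0 < q)
    (B₁ : Fin p → Finset V) (B₂ : Fin q → Finset V)
    (hpd₁ : IsPathDecompOn G V₁ p B₁) (hpd₂ : IsPathDecompOn G V₂ q B₂)
    (hlay₁ : ∀ v w, G.Adj v w → v ∈ V₁ → w ∈ V₁ → |ℓ₁ v - ℓ₁ w| ≤ 1)
    (hlay₂ : ∀ v w, G.Adj v w → v ∈ V₂ → w ∈ V₂ → |ℓ₂ v - ℓ₂ w| ≤ 1)
    (hw₁ : ∀ (i : ℤ) (j : Fin p), ((B₁ j).filter fun v => ℓ₁ v = i).card ≤ k)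
    (hw₂ : ∀ (i : ℤ) (j : Fin q), ((B₂ j).filter fun v => ℓ₂ v = i).card ≤ k)
    (hClast : ∀ v ∈ V₁ ∩ V₂, v ∈ B₁ ⟨p - 1, Nat.sub_lt hp Nat.one_pos⟩)
    (hCfirst : ∀ v ∈ V₁ ∩ V₂, v ∈ B₂ ⟨0, hq⟩)
    (hagree : ∀ v ∈ V₁ ∩ V₂, ℓ₂ v + r = ℓ₁ v) :
    IsLayering G (fun v => if v ∈ V₁ then ℓ₁ v else ℓ₂ v + r) ∧
    ∃ (m : ℕ) (Bf : Fin m → Finset V),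
      IsPathDecomp G m Bf ∧
      LayeredWidthLE (fun v => if v ∈ V₁ then ℓ₁ v else ℓ₂ v + r) m Bf k := by
  classical
  set ℓ : V → ℤ := fun v => if v ∈ V₁ then ℓ₁ v else ℓ₂ v + r with hℓ
  have hmem : ∀ v : V, v ∈ V₁ ∨ v ∈ V₂ := by
    intro v
    have : v ∈ V₁ ∪ V₂ := by rw [hcover]; trivial
    exact this
  have hℓ2 : ∀ v ∈ V₂, ℓ v = ℓ₂ v + r := by
    intro v hv
    by_cases h1 : v ∈ V₁
    · simp only [hℓ, if_pos h1]
      exact (hagree v ⟨h1, hv⟩).symm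
    · simp [hℓ, h1]
  have hℓ1 : ∀ v ∈ V₁, ℓ v = ℓ₁ v := fun v hv => by simp [hℓ, hv]
  constructor
  · intro v w hvw
    rcases hedges v w hvw with ⟨hv, hw⟩ | ⟨hv, hw⟩
    · rw [hℓ1 v hv, hℓ1 w hw]; exact hlay₁ v w hvw hv hw
    · rw [hℓ2 v hv, hℓ2 w hw]
      have := hlay₂ v w hvw hv hw
      simpa using this
  · refine ⟨p + q, fun i => if h : (i : ℕ) < p then B₁ ⟨i, h⟩ else
      B₂ ⟨(i : ℕ) - p, by omega⟩, ?_, ?_⟩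
    · constructor
      · intro v
        rcases hmem v with hv | hv
        · obtain ⟨i, hi⟩ := hpd₁.mem_bag v hv
          exact ⟨⟨i, by omega⟩, by simp [i.isLt, hi]⟩
        · obtain ⟨i, hi⟩ := hpd₂.mem_bag v hv
          refine ⟨⟨p + i, by omega⟩, ?_⟩
          have h : ¬ (p + (i:ℕ) < p) := by omega
          simp only [dif_neg h]
          convert hi using 2
          exact Fin.ext (by simp)
      · intro v i j m hij hjm hvi hvm
        by_cases hj : (j : ℕ) < p
        · have hi : (i : ℕ) < p := by
            have := (Fin.le_def.mp hij); omega
          rw [dif_pos hi] at hvi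
          rw [dif_pos hj]
          by_cases hm : (m : ℕ) < p
          · rw [dif_pos hm] at hvm
            exact hpd₁.interval v ⟨i, hi⟩ ⟨j, hj⟩ ⟨m, hm⟩ (Fin.le_def.mpr (Fin.le_def.mp hij)) (Fin.le_def.mpr (Fin.le_def.mp hjm)) hvi hvm
          · rw [dif_neg hm] at hvm
            have hv1 : v ∈ V₁ := hpd₁.bag_subset _ v hvi
            have hv2 : v ∈ V₂ := hpd₂.bag_subset _ v hvm
            have hlast := hClast v ⟨hv1, hv2⟩
            exact hpd₁.interval v ⟨i, hi⟩ ⟨j, hj⟩ ⟨p - 1, Nat.sub_lt hp Nat.one_pos⟩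
              (Fin.le_def.mpr (Fin.le_def.mp hij)) (Fin.le_def.mpr (by simp; omega)) hvi hlast
        · have hm : ¬ (m : ℕ) < p := by
            have := (Fin.le_def.mp hjm); omega
          rw [dif_neg hm] at hvm
          rw [dif_neg hj]
          by_cases hi : (i : ℕ) < p
          · rw [dif_pos hi] at hvi
            have hv1 : v ∈ V₁ := hpd₁.bag_subset _ v hvi
            have hv2 : v ∈ V₂ := hpd₂.bag_subset _ v hvm
            have hfirst := hCfirst v ⟨hv1, hv2⟩
            exact hpd₂.interval v ⟨0, hq⟩ ⟨(j:ℕ) - p, by omega⟩ ⟨(m:ℕ) - p, by omega⟩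
              (Fin.le_def.mpr (by simp)) (Fin.le_def.mpr (by simp; have := Fin.le_def.mp hjm; omega)) hfirst hvm
          · rw [dif_neg hi] at hvi
            exact hpd₂.interval v ⟨(i:ℕ) - p, by omega⟩ ⟨(j:ℕ) - p, by omega⟩ ⟨(m:ℕ) - p, by omega⟩
              (Fin.le_def.mpr (by simp; have := Fin.le_def.mp hij; omega))
              (Fin.le_def.mpr (by simp; have := Fin.le_def.mp hjm; omega)) hvi hvm
      · intro v w hvw
        rcases hedges v w hvw with ⟨hv, hw⟩ | ⟨hv, hw⟩
        · obtain ⟨i, hvi, hwi⟩ := hpd₁.edge_bag v w hvw hv hw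
          exact ⟨⟨i, by omega⟩, by simp [i.isLt, hvi, hwi]⟩
        · obtain ⟨i, hvi, hwi⟩ := hpd₂.edge_bag v w hvw hv hw
          refine ⟨⟨p + i, by omega⟩, ?_⟩
          have h : ¬ (p + (i:ℕ) < p) := by omega
          simp only [dif_neg h]
          refine ⟨?_, ?_⟩
          · convert hvi using 2; exact Fin.ext (by simp)
          · convert hwi using 2; exact Fin.ext (by simp)
    · intro i j
      by_cases hj : (j : ℕ) < p
      · simp only [dif_pos hj]
        have : ((B₁ ⟨j, hj⟩).filter fun v => ℓ v = i) =
            ((B₁ ⟨j, hj⟩).filter fun v => ℓ₁ v = i) := by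
          apply Finset.filter_congr
          intro v hv
          rw [hℓ1 v (hpd₁.bag_subset _ v hv)]
        rw [this]; exact hw₁ i _
      · simp only [dif_neg hj]
        have : ((B₂ ⟨(j:ℕ) - p, by omega⟩).filter fun v => ℓ v = i) =
            ((B₂ ⟨(j:ℕ) - p, by omega⟩).filter fun v => ℓ₂ v = i - r) := by
          apply Finset.filter_congr
          intro v hv
          rw [hℓ2 v (hpd₂.bag_subset _ v hv)]
          constructor <;> intro h <;> omega
        rw [this]; exact hw₂ (i - r) _
end

section
/- Let ℓ be a layering of a graph G and let σ be a total order on V(G) such that vertices in strictly lower layers come strictly earlier in σ. Suppose vw and xy are edges with left endpoints v and x (with respect to some order ≺_B refining each layer) satisfying ℓ(v) = ℓ(x), and that within each even layer σ agrees with ≺_B while within each odd layer σ reverses ≺_B. If ℓ(v) = ℓ(x) = i is even, v ≺_B x, and the edges cross as v <σ y <σ w <σ x, then a contradiction follows; i.e., this crossing pattern is impossible. -/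
/-- Case 2 of the crossing analysis: with `σ` (encoded by `f`)
refining the layering, agreeing with `≺_B` (encoded by `b`) on even layers and
reversing it on odd layers, two edges `vw`, `xy` with left endpoints `v, x` in
a common even layer cannot cross in the pattern `v <σ y <σ w <σ x`. -/
theorem case_two_crossing_impossible
    {V : Type*} (G : SimpleGraph V) (ℓ : V → ℤ) (b f : V → ℕ)
    (hb : Function.Injective b) (hf : Function.Injective f)
    (hlay : IsLayering G ℓ)
    (href : ∀ u u' : V, ℓ u < ℓ u' → f u < f u')
    (heven : ∀ u u' : V, ℓ u = ℓ u' → Even (ℓ u) → (b u < b u' ↔ f u < f u'))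
    (hodd : ∀ u u' : V, ℓ u = ℓ u' → Odd (ℓ u) → (b u < b u' ↔ f u' < f u))
    (v w x y : V) (hvw : G.Adj v w) (hxy : G.Adj x y)
    (hleft₁ : b v < b w) (hleft₂ : b x < b y)
    (hsame : ℓ v = ℓ x) (hevenlayer : Even (ℓ v))
    (hB : b v < b x)
    (hcross : f v < f y ∧ f y < f w ∧ f w < f x) :
    False := by
  obtain ⟨h1, h2, h3⟩ := hcross
  have a1 := abs_le.mp (hlay v w hvw)
  have a2 := abs_le.mp (hlay x y hxy)
  have hwv : ¬ ℓ w < ℓ v := fun h => absurd (href w v h) (by omega)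
  have hyv : ¬ ℓ y < ℓ v := fun h => absurd (href y v h) (by omega)
  have hxw : ¬ ℓ x < ℓ w := fun h => absurd (href x w h) (by omega)
  have hwy : ¬ ℓ w < ℓ y := fun h => absurd (href w y h) (by omega)
  have hyw : ℓ y = ℓ w := by omega
  have hwx : ℓ w = ℓ x := by omega
  have e1 : b y < b w := (heven y w hyw (by rw [hyw, hwx, ← hsame]; exact hevenlayer)).mpr h2
  have e2 : b w < b x := (heven w x hwx (by rw [hwx, ← hsame]; exact hevenlayer)).mpr h3
  omega
end
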